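/- (Polar decomposition of SU(N+1), part a.) Let N ≥ 1. For every g in SU(N+1) there exist θ ∈ ℝ and matrices k₁, k₂ in SU(N+1), each of the block-diagonal form diag(λ, A) with A ∈ U(N) an N×N unitary matrix and λ = (det A)⁻¹, such that g = k₁ · E(θ) · k₂, where E(θ) is the (N+1)×(N+1) matrix equal to the 2×2 rotation block [[cos θ, −sin θ],[sin θ, cos θ]] in the top-left corner, the identity matrix 1_{N−1} in the bottom-right (N−1)×(N−1) corner, and zeros elsewhere. -/

import Mathlib

open Matrix

/-- The block-diagonal matrix `diag(λ, A)` of size `(N+1) × (N+1)`, with `λ` in the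
`(0,0)` corner and `A` as the lower-right `N × N` block. -/
def blkDiag {N : ℕ} (lam : ℂ) (A : Matrix (Fin N) (Fin N) ℂ) :
    Matrix (Fin (N + 1)) (Fin (N + 1)) ℂ :=
  Matrix.of (Fin.cons (Fin.cons lam 0) (fun i => Fin.cons 0 (A i)))

/-- The matrix `E(θ) = exp(θ H)`: the `2 × 2` rotation block
`[[cos θ, −sin θ], [sin θ, cos θ]]` in the top-left corner, the identity in the
bottom-right `(N−1) × (N−1)` corner, and zeros elsewhere. -/
noncomputable def Emat (N : ℕ) (θ : ℝ) : Matrix (Fin (N + 1)) (Fin (N + 1)) ℂ :=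
  fun i j =>
    if i = 0 ∧ j = 0 then (Real.cos θ : ℂ)
    else if i = 0 ∧ j = 1 then (-Real.sin θ : ℂ)
    else if i = 1 ∧ j = 0 then (Real.sin θ : ℂ)
    else if i = 1 ∧ j = 1 then (Real.cos θ : ℂ)
    else if i = j then 1 else 0

@[simp] lemma blkDiag_zero_zero {N : ℕ} (l : ℂ) (A : Matrix (Fin N) (Fin N) ℂ) :
    blkDiag l A 0 0 = l := rfl

@[simp] lemma blkDiag_zero_succ {N : ℕ} (l : ℂ) (A : Matrix (Fin N) (Fin N) ℂ) (j : Fin N) :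
    blkDiag l A 0 j.succ = 0 := rfl

@[simp] lemma blkDiag_succ_zero {N : ℕ} (l : ℂ) (A : Matrix (Fin N) (Fin N) ℂ) (i : Fin N) :
    blkDiag l A i.succ 0 = 0 := by
  simp [blkDiag]

@[simp] lemma blkDiag_succ_succ {N : ℕ} (l : ℂ) (A : Matrix (Fin N) (Fin N) ℂ) (i j : Fin N) :
    blkDiag l A i.succ j.succ = A i j := by
  simp [blkDiag]

lemma blkDiag_mul {N : ℕ} (l m : ℂ) (A B : Matrix (Fin N) (Fin N) ℂ) :
    blkDiag l A * blkDiag m B = blkDiag (l * m) (A * B) := by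
  ext i j
  rw [mul_apply]
  refine Fin.cases ?_ ?_ i <;> [skip; intro i'] <;> refine Fin.cases ?_ ?_ j <;>
    [skip; intro j'; skip; intro j'] <;>
    simp [Fin.sum_univ_succ, mul_apply]

lemma blkDiag_one {N : ℕ} : blkDiag (1 : ℂ) (1 : Matrix (Fin N) (Fin N) ℂ) = 1 := by
  ext i j
  refine Fin.cases ?_ ?_ i <;> [skip; intro i'] <;> refine Fin.cases ?_ ?_ j <;>
    [skip; intro j'; skip; intro j'] <;>
    simp [one_apply, Fin.succ_ne_zero, (Fin.succ_ne_zero _).symm, Fin.succ_inj]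

lemma star_blkDiag {N : ℕ} (l : ℂ) (A : Matrix (Fin N) (Fin N) ℂ) :
    star (blkDiag l A) = blkDiag (star l) (star A) := by
  ext i j
  show (blkDiag l A).conjTranspose i j = _
  rw [conjTranspose_apply]
  refine Fin.cases ?_ ?_ i <;> [skip; intro i'] <;> refine Fin.cases ?_ ?_ j <;>
    [skip; intro j'; skip; intro j'] <;> simp [conjTranspose_apply]

lemma det_blkDiag {N : ℕ} (l : ℂ) (A : Matrix (Fin N) (Fin N) ℂ) :
    (blkDiag l A).det = l * A.det := by
  rw [det_succ_row_zero]
  rw [Fin.sum_univ_succ]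
  have h0 : ∀ j : Fin N, (-1 : ℂ) ^ ((j.succ : Fin (N+1)) : ℕ) * blkDiag l A 0 j.succ *
      ((blkDiag l A).submatrix Fin.succ j.succ.succAbove).det = 0 := by
    intro j; simp
  rw [Finset.sum_eq_zero (fun j _ => h0 j)]
  have : (blkDiag l A).submatrix Fin.succ Fin.succ = A := by
    ext i j
    simp
  simp [this]


lemma fin_zero_ne_one {N : ℕ} (hN : 1 ≤ N) : (0 : Fin (N+1)) ≠ 1 := by
  simp [Fin.ext_iff, Fin.val_one, Nat.mod_eq_of_lt (by omega : 1 < N + 1)]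

lemma Emat_rep {N : ℕ} (hN : 1 ≤ N) (θ : ℝ) :
    Emat N θ = 1 + ((Real.cos θ : ℂ) - 1) •
        (Matrix.single 0 0 (1:ℂ) + Matrix.single 1 1 (1:ℂ)) +
      (Real.sin θ : ℂ) • (Matrix.single 1 0 (1:ℂ) - Matrix.single 0 1 (1:ℂ)) := by
  have h01 := fin_zero_ne_one hN
  ext i j
  simp only [Emat, Matrix.add_apply, Matrix.smul_apply, Matrix.sub_apply, one_apply, smul_eq_mul]
  by_cases hi0 : i = 0 <;> by_cases hj0 : j = 0 <;> by_cases hi1 : i = 1 <;>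
    by_cases hj1 : j = 1 <;>
    simp_all [Matrix.single, Matrix.of_apply, eq_comm]

lemma Emat_mul {N : ℕ} (hN : 1 ≤ N) (θ ψ : ℝ) :
    Emat N θ * Emat N ψ = Emat N (θ + ψ) := by
  have h01 := fin_zero_ne_one hN
  have m1 : ∀ a b : Fin (N+1), Matrix.single a 0 (1:ℂ) * Matrix.single 1 b 1 = 0 :=
    fun a b => Matrix.single_mul_single_of_ne _ _ _ _ h01 _
  have m2 : ∀ a b : Fin (N+1), Matrix.single a 1 (1:ℂ) * Matrix.single 0 b 1 = 0 :=
    fun a b => Matrix.single_mul_single_of_ne _ _ _ _ h01.symm _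
  rw [Emat_rep hN, Emat_rep hN, Emat_rep hN, Real.cos_add, Real.sin_add]
  push_cast
  simp only [add_mul, mul_add, sub_mul, mul_sub, smul_mul_assoc, mul_smul_comm, one_mul,
    mul_one, Matrix.single_mul_single_same, m1, m2, smul_zero, zero_mul, smul_add, smul_sub,
    smul_smul]
  module

lemma Emat_zero {N : ℕ} (hN : 1 ≤ N) : Emat N 0 = 1 := by
  rw [Emat_rep hN]; simp

lemma Emat_mul_neg {N : ℕ} (hN : 1 ≤ N) (θ : ℝ) : Emat N θ * Emat N (-θ) = 1 := by
  rw [Emat_mul hN, add_neg_cancel, Emat_zero hN]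

lemma Emat_neg_mul {N : ℕ} (hN : 1 ≤ N) (θ : ℝ) : Emat N (-θ) * Emat N θ = 1 := by
  rw [Emat_mul hN, neg_add_cancel, Emat_zero hN]

lemma star_stdBasisMatrix {N : ℕ} (i j : Fin N) :
    star (Matrix.single i j (1:ℂ)) = Matrix.single j i (1:ℂ) := by
  ext a b
  show (Matrix.single i j (1:ℂ)).conjTranspose a b = _
  rw [conjTranspose_apply]
  simp [Matrix.single, and_comm]

lemma star_Emat {N : ℕ} (hN : 1 ≤ N) (θ : ℝ) : star (Emat N θ) = Emat N (-θ) := by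
  rw [Emat_rep hN, Emat_rep hN, Real.cos_neg, Real.sin_neg]
  simp only [star_add, star_sub, star_smul, star_one, star_stdBasisMatrix,
    RCLike.star_def, map_sub, _root_.map_one, Complex.conj_ofReal]
  module

lemma succ_succ_ne_one {M : ℕ} (j : Fin M) : (j.succ.succ : Fin (M+2)) ≠ 1 := by
  intro h
  have h' := congrArg Fin.val h
  simp [Fin.val_succ] at h'

lemma det_Emat {N : ℕ} (hN : 1 ≤ N) (θ : ℝ) : (Emat N θ).det = 1 := by
  obtain ⟨M, rfl⟩ : ∃ M, N = M + 1 := ⟨N - 1, by omega⟩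
  have h01 : (0 : Fin (M+2)) ≠ 1 := fin_zero_ne_one (by omega)
  have hA0 : (Fin.succAbove 1 (0 : Fin (M+1)) : Fin (M+2)) = 0 := by
    simp [Fin.succAbove, Fin.lt_def]
  have hAs : ∀ j : Fin M, (Fin.succAbove 1 (j.succ : Fin (M+1)) : Fin (M+2)) = j.succ.succ := by
    intro j
    simp [Fin.succAbove, Fin.lt_def]
  have hS0 : (Emat (M+1) θ).submatrix Fin.succ (Fin.succAbove 0) =
      diagonal (Fin.cons (Real.cos θ : ℂ) 1) := by
    ext i j
    simp only [Fin.succAbove_zero, submatrix_apply]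
    refine Fin.cases ?_ ?_ i <;> [skip; intro i'] <;> refine Fin.cases ?_ ?_ j <;>
      [skip; intro j'; skip; intro j'] <;>
      simp [Emat, diagonal_apply, Fin.succ_zero_eq_one, Fin.succ_ne_zero,
        (Fin.succ_ne_zero _).symm, succ_succ_ne_one, (succ_succ_ne_one _).symm, Fin.succ_inj]
  have hS1 : (Emat (M+1) θ).submatrix Fin.succ (Fin.succAbove 1) =
      diagonal (Fin.cons (Real.sin θ : ℂ) 1) := by
    ext i j
    simp only [submatrix_apply]
    refine Fin.cases ?_ ?_ i <;> [skip; intro i'] <;> refine Fin.cases ?_ ?_ j <;>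
      [skip; intro j'; skip; intro j'] <;>
      simp [hA0, hAs, Emat, diagonal_apply, Fin.succ_zero_eq_one, Fin.succ_ne_zero,
        (Fin.succ_ne_zero _).symm, succ_succ_ne_one, (succ_succ_ne_one _).symm, Fin.succ_inj,
        h01, h01.symm]
  have hdiag : ∀ c : ℂ, (diagonal (Fin.cons c (1 : Fin M → ℂ))).det = c := by
    intro c
    rw [det_diagonal, Fin.prod_univ_succ]
    simp
  rw [det_succ_row_zero, Fin.sum_univ_succ, Fin.sum_univ_succ]
  have hz : ∀ j : Fin M,
      ((-1 : ℂ) ^ (((j.succ.succ : Fin (M+2))) : ℕ) * Emat (M+1) θ 0 j.succ.succ *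
        ((Emat (M+1) θ).submatrix Fin.succ (j.succ.succ).succAbove).det) = 0 := by
    intro j
    have : Emat (M+1) θ 0 j.succ.succ = 0 := by
      simp [Emat, Fin.succ_ne_zero, (Fin.succ_ne_zero j.succ).symm, succ_succ_ne_one, h01]
    simp [this]
  rw [Finset.sum_eq_zero (fun j _ => hz j)]
  have e00 : Emat (M+1) θ 0 0 = (Real.cos θ : ℂ) := by simp [Emat]
  have e01 : Emat (M+1) θ 0 1 = (-Real.sin θ : ℂ) := by simp [Emat, h01.symm]
  rw [Fin.succ_zero_eq_one, e00, e01, hS0, hS1, hdiag, hdiag]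
  have h1 : (((1 : Fin (M+2))) : ℕ) = 1 := by
    simp [Fin.val_one, Nat.mod_eq_of_lt (by omega : 1 < M + 2)]
  rw [h1]
  norm_num
  norm_cast
  nlinarith [Real.sin_sq_add_cos_sq θ]

lemma exists_unitary_col {M : ℕ} (u : Fin (M+1) → ℂ)
    (hu : ∑ i, star (u i) * u i = 1) :
    ∃ B ∈ Matrix.unitaryGroup (Fin (M+1)) ℂ, ∀ i, B i 0 = u i := by
  classical
  let v : Fin (M+1) → EuclideanSpace ℂ (Fin (M+1)) := fun j => if j = 0 then WithLp.toLp 2 u else 0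
  have hcard : Module.finrank ℂ (EuclideanSpace ℂ (Fin (M+1))) = Fintype.card (Fin (M+1)) := by
    simp
  have horth : Orthonormal ℂ (Set.restrict {(0 : Fin (M+1))} v) := by
    rw [orthonormal_iff_ite]
    rintro ⟨i, hi⟩ ⟨j, hj⟩
    simp only [Set.mem_singleton_iff] at hi hj
    subst hi; subst hj
    simp only [Set.restrict_apply, v, if_pos rfl, if_true]
    rw [PiLp.inner_apply]
    simpa [RCLike.inner_apply, Set.restrict, v, WithLp.ofLp_toLp, Complex.conj_mul'] using hu
  obtain ⟨b, hb⟩ := horth.exists_orthonormalBasis_extension_of_card_eq hcard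
  have hb0 : b 0 = (WithLp.toLp 2 u : EuclideanSpace ℂ (Fin (M+1))) := by
    have := hb 0 (Set.mem_singleton _)
    simpa [v] using this
  refine ⟨Matrix.of (fun i j => b j i), ?_, ?_⟩
  · rw [Matrix.mem_unitaryGroup_iff']
    have hob := b.orthonormal
    rw [orthonormal_iff_ite] at hob
    ext j k
    rw [Matrix.mul_apply, Matrix.one_apply]
    have h2 := hob j k
    rw [PiLp.inner_apply] at h2
    simpa [Matrix.star_apply, Matrix.conjTranspose_apply, RCLike.inner_apply, mul_comm] using h2
  · intro i
    show b 0 i = u i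
    rw [hb0]

lemma det_diag_cons {M : ℕ} (c : ℂ) :
    (diagonal (Fin.cons c (1 : Fin M → ℂ))).det = c := by
  rw [det_diagonal, Fin.prod_univ_succ]
  simp

lemma diag_cons_mem {M : ℕ} (c : ℂ) (hc : star c * c = 1) :
    diagonal (Fin.cons c (1 : Fin M → ℂ)) ∈ Matrix.unitaryGroup (Fin (M+1)) ℂ := by
  rw [Matrix.mem_unitaryGroup_iff']
  rw [Matrix.star_eq_conjTranspose, diagonal_conjTranspose, diagonal_mul_diagonal]
  have h : (fun i => star (Fin.cons c (1 : Fin M → ℂ)) i * Fin.cons c (1 : Fin M → ℂ) i)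
      = (1 : Fin (M+1) → ℂ) := by
    funext i
    refine Fin.cases ?_ ?_ i
    · simpa using hc
    · intro i'; simp
  calc diagonal (fun i => star (Fin.cons c (1 : Fin M → ℂ)) i * Fin.cons c (1 : Fin M → ℂ) i)
      = diagonal (1 : Fin (M+1) → ℂ) := by rw [h]
    _ = 1 := diagonal_one

lemma blkDiag_mem {N : ℕ} (l : ℂ) (hl : star l * l = 1) (A : Matrix (Fin N) (Fin N) ℂ)
    (hA : A ∈ Matrix.unitaryGroup (Fin N) ℂ) :
    blkDiag l A ∈ Matrix.unitaryGroup (Fin (N+1)) ℂ := by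
  rw [Matrix.mem_unitaryGroup_iff']
  rw [star_blkDiag, blkDiag_mul, hl, (Matrix.mem_unitaryGroup_iff'.mp hA), blkDiag_one]

lemma star_det_unitary {N : ℕ} {A : Matrix (Fin N) (Fin N) ℂ}
    (hA : A ∈ Matrix.unitaryGroup (Fin N) ℂ) : star A.det * A.det = 1 := by
  have := Matrix.mem_unitaryGroup_iff'.mp hA
  have h2 := congrArg Matrix.det this
  rwa [Matrix.det_mul, Matrix.star_eq_conjTranspose, Matrix.det_conjTranspose,
    Matrix.det_one] at h2

lemma exists_unit_sqrt (z : ℂ) (hz : Complex.normSq z = 1) :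
    ∃ μ : ℂ, star μ * μ = 1 ∧ μ * μ = z := by
  have hz0 : z ≠ 0 := by
    intro h; rw [h] at hz; simp at hz
  refine ⟨Complex.exp (Complex.log z / 2), ?_, ?_⟩
  · have h2 : Complex.exp (Complex.log z / 2) * Complex.exp (Complex.log z / 2) = z := by
      rw [← Complex.exp_add]
      ring_nf
      rw [Complex.exp_log hz0]
    have := congrArg Complex.normSq h2
    rw [Complex.normSq_mul, hz] at this
    have habs : Complex.normSq (Complex.exp (Complex.log z / 2)) = 1 := by
      nlinarith [Complex.normSq_nonneg (Complex.exp (Complex.log z / 2))]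
    rw [RCLike.star_def, ← Complex.normSq_eq_conj_mul_self, habs]
    norm_num
  · rw [← Complex.exp_add]
    ring_nf
    rw [Complex.exp_log hz0]


set_option maxHeartbeats 2000000 in
/-- Polar (Cartan) decomposition of `SU(N+1)`: every `g ∈ SU(N+1)` can be written as
`g = k₁ · E(θ) · k₂` with `k₁ = diag((det A₁)⁻¹, A₁)`, `k₂ = diag((det A₂)⁻¹, A₂)` and
`A₁, A₂ ∈ U(N)`. -/
theorem polar_decomposition_SU (N : ℕ) (hN : 1 ≤ N)
    (g : Matrix (Fin (N + 1)) (Fin (N + 1)) ℂ)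
    (hg : g ∈ Matrix.specialUnitaryGroup (Fin (N + 1)) ℂ) :
    ∃ (θ : ℝ) (A₁ A₂ : Matrix (Fin N) (Fin N) ℂ),
      A₁ ∈ Matrix.unitaryGroup (Fin N) ℂ ∧ A₂ ∈ Matrix.unitaryGroup (Fin N) ℂ ∧
      g = blkDiag (A₁.det)⁻¹ A₁ * Emat N θ * blkDiag (A₂.det)⁻¹ A₂ := by
  obtain ⟨M, rfl⟩ : ∃ M, N = M + 1 := ⟨N - 1, by omega⟩
  rw [Matrix.mem_specialUnitaryGroup_iff] at hg
  obtain ⟨hgu, hgdet⟩ := hg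
  have hsg : star g * g = 1 := Matrix.mem_unitaryGroup_iff'.mp hgu
  have hgs : g * star g = 1 := Matrix.mem_unitaryGroup_iff.mp hgu
  -- first column data
  set a : ℂ := g 0 0 with ha_def
  set c : Fin (M+1) → ℂ := fun i => g i.succ 0 with hc_def
  have hcol : Complex.normSq a + ∑ i, Complex.normSq (c i) = 1 := by
    have h1 := congrFun (congrFun hsg 0) 0
    rw [Matrix.mul_apply, Matrix.one_apply_eq] at h1
    have h2 : ∑ p, star (g p 0) * g p 0 = 1 := by
      simpa [Matrix.star_apply] using h1
    rw [Fin.sum_univ_succ] at h2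
    have : ((Complex.normSq a + ∑ i, Complex.normSq (c i) : ℝ) : ℂ) = ((1:ℝ):ℂ) := by
      push_cast
      rw [← h2]
      simp [Complex.normSq_eq_conj_mul_self, RCLike.star_def, a, c]
    exact_mod_cast this
  set s : ℝ := Real.sqrt (∑ i, Complex.normSq (c i)) with hs_def
  have hsum_nonneg : 0 ≤ ∑ i, Complex.normSq (c i) :=
    Finset.sum_nonneg fun i _ => Complex.normSq_nonneg _
  have hs_sq : s ^ 2 = ∑ i, Complex.normSq (c i) := Real.sq_sqrt hsum_nonneg
  have hs_nonneg : 0 ≤ s := Real.sqrt_nonneg _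
  have hs_le : s ≤ 1 := by
    nlinarith [Complex.normSq_nonneg a]
  set θ : ℝ := Real.arcsin s with hθ_def
  have hsin : Real.sin θ = s := Real.sin_arcsin (by linarith) hs_le
  have hcos : Real.cos θ = ‖a‖ := by
    rw [hθ_def, Real.cos_arcsin]
    rw [Complex.norm_def]
    congr 1
    nlinarith
  -- a unitary B whose first column is (essentially) c
  have hBex : ∃ B ∈ Matrix.unitaryGroup (Fin (M+1)) ℂ,
      ∀ i, (Real.sin θ : ℂ) * B i 0 = c i := by
    by_cases hs0 : s = 0
    · refine ⟨1, Submonoid.one_mem _, fun i => ?_⟩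
      have hc0 : ∀ i, c i = 0 := by
        intro i
        have hz : ∑ j, Complex.normSq (c j) = 0 := by
          rw [← hs_sq, hs0]; ring
        have := (Finset.sum_eq_zero_iff_of_nonneg
          (fun j _ => Complex.normSq_nonneg (c j))).mp hz i (Finset.mem_univ i)
        exact Complex.normSq_eq_zero.mp this
      rw [hc0 i, hsin, hs0]
      simp
    · have hspos : 0 < s := lt_of_le_of_ne hs_nonneg (Ne.symm hs0)
      have hunit : ∑ i, star ((c i) / (s:ℂ)) * ((c i) / (s:ℂ)) = 1 := by
        have : ∀ i, star ((c i) / (s:ℂ)) * ((c i) / (s:ℂ))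
            = ((Complex.normSq (c i) / (s^2) : ℝ) : ℂ) := by
          intro i
          push_cast
          rw [RCLike.star_def, map_div₀, Complex.conj_ofReal]
          rw [div_mul_div_comm, ← Complex.normSq_eq_conj_mul_self]
          norm_cast
          ring_nf
        rw [Finset.sum_congr rfl (fun i _ => this i)]
        rw [← Complex.ofReal_sum]
        rw [← Finset.sum_div]
        rw [← hs_sq]
        norm_cast
        field_simp
      obtain ⟨B, hBmem, hBcol⟩ := exists_unitary_col _ hunit
      refine ⟨B, hBmem, fun i => ?_⟩
      have hsC : (s:ℂ) ≠ 0 := Complex.ofReal_ne_zero.mpr hs0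
      rw [hBcol i, hsin, mul_div_assoc', mul_comm, mul_div_assoc, div_self hsC, mul_one]
  obtain ⟨B, hBmem, hBcol⟩ := hBex
  set d : ℂ := B.det with hd_def
  have hdunit : star d * d = 1 := star_det_unitary hBmem
  have hd0 : d ≠ 0 := by
    intro h; rw [h] at hdunit; simp at hdunit
  -- choice of the phase μ
  have hμex : ∃ μ : ℂ, star μ * μ = 1 ∧ μ * μ * (d * a) = (‖a‖ : ℂ) := by
    by_cases ha0 : a = 0
    · exact ⟨1, by simp, by simp [ha0]⟩
    · have hna : Complex.normSq ((‖a‖ : ℂ) / (d * a)) = 1 := by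
        rw [Complex.normSq_div, Complex.normSq_mul]
        rw [Complex.normSq_eq_norm_sq, Complex.normSq_eq_norm_sq, Complex.normSq_eq_norm_sq]
        simp only [Complex.norm_real, norm_norm]
        have h1 : Complex.normSq d = 1 := by
          have := hdunit
          rw [RCLike.star_def, ← Complex.normSq_eq_conj_mul_self] at this
          exact_mod_cast this
        rw [Complex.sq_norm d, h1]
        have : ‖a‖ ≠ 0 := norm_ne_zero_iff.mpr ha0
        field_simp
      obtain ⟨μ, hμunit, hμsq⟩ := exists_unit_sqrt _ hna
      refine ⟨μ, hμunit, ?_⟩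
      rw [hμsq]
      have : (d * a) ≠ 0 := mul_ne_zero hd0 ha0
      field_simp
  obtain ⟨μ, hμunit, hμeq⟩ := hμex
  have hμ0 : μ ≠ 0 := by
    intro h; rw [h] at hμunit; simp at hμunit
  have hμinv : μ⁻¹ = star μ := inv_eq_of_mul_eq_one_left hμunit
  have hN' : 1 ≤ M + 1 := by omega
  -- the diagonal phase matrix
  set D : Matrix (Fin (M+1)) (Fin (M+1)) ℂ := diagonal (Fin.cons μ (1 : Fin M → ℂ)) with hD_def
  have hDmem : D ∈ Matrix.unitaryGroup (Fin (M+1)) ℂ := diag_cons_mem μ hμunit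
  have hDdet : D.det = μ := det_diag_cons μ
  set A₁ : Matrix (Fin (M+1)) (Fin (M+1)) ℂ := B * D with hA₁_def
  have hA₁mem : A₁ ∈ Matrix.unitaryGroup (Fin (M+1)) ℂ := mul_mem hBmem hDmem
  have hA₁det : A₁.det = d * μ := by rw [hA₁_def, det_mul, hDdet, hd_def]
  have hA₁col : ∀ i, A₁ i 0 = B i 0 * μ := by
    intro i
    rw [hA₁_def, hD_def, Matrix.mul_diagonal]
    simp
  have hA₁det0 : A₁.det ≠ 0 := by
    intro h
    have := star_det_unitary hA₁mem
    rw [h] at this; simp at this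
  have hΔinv : (A₁.det)⁻¹ = star A₁.det := inv_eq_of_mul_eq_one_left (star_det_unitary hA₁mem)
  have hk1l : star (A₁.det)⁻¹ * (A₁.det)⁻¹ = 1 := by
    rw [hΔinv, star_star, mul_comm]; exact star_det_unitary hA₁mem
  have hk2l : star (μ⁻¹ : ℂ) * μ⁻¹ = 1 := by
    rw [hμinv, star_star, mul_comm]; exact hμunit
  set k₁ : Matrix (Fin (M+2)) (Fin (M+2)) ℂ := blkDiag (A₁.det)⁻¹ A₁ with hk₁_def
  set k₂ : Matrix (Fin (M+2)) (Fin (M+2)) ℂ := blkDiag μ⁻¹ D with hk₂_def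
  have hk1mem : k₁ ∈ Matrix.unitaryGroup (Fin (M+2)) ℂ := blkDiag_mem _ hk1l _ hA₁mem
  have hk2mem : k₂ ∈ Matrix.unitaryGroup (Fin (M+2)) ℂ := blkDiag_mem _ hk2l _ hDmem
  have hk1s : k₁ * star k₁ = 1 := Matrix.mem_unitaryGroup_iff.mp hk1mem
  have hsk1 : star k₁ * k₁ = 1 := Matrix.mem_unitaryGroup_iff'.mp hk1mem
  have hsk2 : star k₂ * k₂ = 1 := Matrix.mem_unitaryGroup_iff'.mp hk2mem
  -- the target first column
  set t : Fin (M+2) → ℂ :=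
    Fin.cons (Real.cos θ : ℂ) (fun i : Fin (M+1) => if i = 0 then (Real.sin θ : ℂ) else 0)
    with ht_def
  have claimA : k₁ *ᵥ t = fun p => μ * g p 0 := by
    funext p
    refine Fin.cases ?_ ?_ p
    · show ∑ q, k₁ 0 q * t q = μ * g 0 0
      rw [Fin.sum_univ_succ]
      simp only [hk₁_def, ht_def, blkDiag_zero_zero, blkDiag_zero_succ, Fin.cons_zero,
        Fin.cons_succ, zero_mul, Finset.sum_const_zero, add_zero]
      rw [hA₁det]
      have hcosC : ((Real.cos θ : ℝ) : ℂ) = (‖a‖ : ℂ) := by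
        exact_mod_cast congrArg (Complex.ofReal) hcos
      rw [hcosC]
      have hdμ : d * μ ≠ 0 := mul_ne_zero hd0 hμ0
      field_simp
      linear_combination -hμeq
    · intro i
      show ∑ q, k₁ i.succ q * t q = μ * g i.succ 0
      rw [Fin.sum_univ_succ]
      simp only [hk₁_def, ht_def, blkDiag_succ_zero, blkDiag_succ_succ, Fin.cons_zero,
        Fin.cons_succ, zero_mul, zero_add, mul_ite, mul_zero]
      rw [Finset.sum_ite_eq' Finset.univ (0 : Fin (M+1)) (fun j => A₁ i j * (Real.sin θ : ℂ))]
      simp only [Finset.mem_univ, if_true]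
      rw [hA₁col i]
      have : (Real.sin θ : ℂ) * B i 0 = c i := hBcol i
      rw [hc_def] at this
      calc B i 0 * μ * (Real.sin θ : ℂ) = μ * ((Real.sin θ : ℂ) * B i 0) := by ring
        _ = μ * g i.succ 0 := by rw [this]
  have claimB : ∀ p, (g * star k₂) p 0 = μ * g p 0 := by
    intro p
    rw [Matrix.mul_apply, Fin.sum_univ_succ]
    simp only [Matrix.star_apply, hk₂_def, blkDiag_zero_zero, blkDiag_zero_succ, star_zero,
      mul_zero, Finset.sum_const_zero, add_zero]
    rw [hμinv, star_star]
    ring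
  have hcolh : ∀ p, (star k₁ * (g * star k₂)) p 0 = t p := by
    intro p
    rw [Matrix.mul_apply]
    have hrw : ∀ q, (g * star k₂) q 0 = (k₁ *ᵥ t) q := by
      intro q
      rw [claimB q, claimA]
    rw [Finset.sum_congr rfl (fun q _ => by rw [hrw q])]
    calc (∑ q, (star k₁) p q * (k₁ *ᵥ t) q)
        = ((star k₁) *ᵥ (k₁ *ᵥ t)) p := rfl
      _ = ((star k₁ * k₁) *ᵥ t) p := by rw [mulVec_mulVec]
      _ = t p := by rw [hsk1, one_mulVec]
  set u : Matrix (Fin (M+2)) (Fin (M+2)) ℂ :=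
    Emat (M+1) (-θ) * (star k₁ * (g * star k₂)) with hu_def
  have hucol : ∀ p, u p 0 = if p = 0 then 1 else 0 := by
    intro p
    rw [hu_def, Matrix.mul_apply]
    rw [Finset.sum_congr rfl (fun q _ => by rw [hcolh q])]
    rw [Fin.sum_univ_succ]
    simp only [ht_def, Fin.cons_zero, Fin.cons_succ, mul_ite, mul_zero]
    rw [Finset.sum_ite_eq' Finset.univ (0 : Fin (M+1))
      (fun j => Emat (M+1) (-θ) p j.succ * (Real.sin θ : ℂ))]
    simp only [Finset.mem_univ, if_true]
    have h01 : (0 : Fin (M+2)) ≠ 1 := fin_zero_ne_one hN'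
    by_cases hp0 : p = 0
    · subst hp0
      rw [if_pos rfl]
      have e1 : Emat (M+1) (-θ) 0 0 = (Real.cos (-θ) : ℂ) := by simp [Emat]
      have e2 : Emat (M+1) (-θ) 0 (Fin.succ 0) = (-Real.sin (-θ) : ℂ) := by
        rw [Fin.succ_zero_eq_one]
        simp [Emat, h01.symm]
      rw [e1, e2, Real.cos_neg, Real.sin_neg]
      push_cast
      ring_nf
      norm_cast
      nlinarith [Real.sin_sq_add_cos_sq θ]
    · rw [if_neg hp0]
      by_cases hp1 : p = 1
      · subst hp1
        have e1 : Emat (M+1) (-θ) 1 0 = (Real.sin (-θ) : ℂ) := by simp [Emat, h01.symm]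
        have e2 : Emat (M+1) (-θ) 1 (Fin.succ 0) = (Real.cos (-θ) : ℂ) := by
          rw [Fin.succ_zero_eq_one]
          simp [Emat, h01, h01.symm]
        rw [e1, e2, Real.cos_neg, Real.sin_neg]
        push_cast
        ring
      · have e1 : Emat (M+1) (-θ) p 0 = 0 := by simp [Emat, hp0, hp1]
        have e2 : Emat (M+1) (-θ) p (Fin.succ 0) = 0 := by
          rw [Fin.succ_zero_eq_one]
          simp [Emat, hp0, hp1, h01.symm]
        rw [e1, e2]
        ring
  have hEmem : Emat (M+1) (-θ) ∈ Matrix.unitaryGroup (Fin (M+2)) ℂ := by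
    rw [Matrix.mem_unitaryGroup_iff]
    rw [star_Emat hN', neg_neg, Emat_neg_mul hN']
  have humem : u ∈ Matrix.unitaryGroup (Fin (M+2)) ℂ := by
    rw [hu_def]
    exact mul_mem hEmem (mul_mem (Unitary.star_mem hk1mem) (mul_mem hgu (Unitary.star_mem hk2mem)))
  have husu : star u * u = 1 := Matrix.mem_unitaryGroup_iff'.mp humem
  have hrowu : ∀ j : Fin (M+1), u 0 j.succ = 0 := by
    intro j
    have h := congrFun (congrFun husu 0) j.succ
    rw [Matrix.mul_apply] at h
    have hterm : ∀ p, (star u) 0 p * u p j.succ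
        = (if p = 0 then 1 else 0) * u p j.succ := by
      intro p
      rw [Matrix.star_apply, hucol p]
      split <;> simp
    rw [Finset.sum_congr rfl (fun p _ => hterm p)] at h
    simp only [ite_mul, one_mul, zero_mul] at h
    rw [Finset.sum_ite_eq' Finset.univ (0 : Fin (M+2)) (fun p => u p j.succ)] at h
    simp only [Finset.mem_univ, if_true] at h
    rw [h]
    exact (Matrix.one_apply_ne (Fin.succ_ne_zero j).symm).symm
  set Cm : Matrix (Fin (M+1)) (Fin (M+1)) ℂ :=
    Matrix.of (fun i j : Fin (M+1) => u i.succ j.succ) with hCm_def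
  have hublk : u = blkDiag 1 Cm := by
    ext p q
    refine Fin.cases ?_ ?_ p <;> [skip; intro p'] <;> refine Fin.cases ?_ ?_ q <;>
      [skip; intro q'; skip; intro q']
    · rw [hucol 0, if_pos rfl, blkDiag_zero_zero]
    · rw [hrowu q', blkDiag_zero_succ]
    · rw [hucol p'.succ, if_neg (Fin.succ_ne_zero p'), blkDiag_succ_zero]
    · rw [blkDiag_succ_succ]
      rfl
  have hCmem : Cm ∈ Matrix.unitaryGroup (Fin (M+1)) ℂ := by
    rw [Matrix.mem_unitaryGroup_iff']
    have h := husu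
    rw [hublk, star_blkDiag, blkDiag_mul, star_one, one_mul] at h
    ext i j
    have h2 := congrFun (congrFun h i.succ) j.succ
    rw [blkDiag_succ_succ] at h2
    rw [h2]
    rw [Matrix.one_apply, Matrix.one_apply]
    simp [Fin.succ_inj]
  have hdetu : u.det = 1 := by
    rw [hu_def, det_mul, det_mul, det_Emat hN', one_mul]
    have hdk1 : k₁.det = 1 := by
      rw [hk₁_def, det_blkDiag, inv_mul_cancel₀ hA₁det0]
    have hdk2 : k₂.det = 1 := by
      rw [hk₂_def, det_blkDiag, hDdet, inv_mul_cancel₀ hμ0]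
    rw [Matrix.star_eq_conjTranspose, Matrix.det_conjTranspose, hdk1, det_mul, hgdet,
      Matrix.star_eq_conjTranspose, Matrix.det_conjTranspose, hdk2]
    simp
  have hdetC : Cm.det = 1 := by
    have h1 : u.det = Cm.det := by rw [hublk, det_blkDiag, one_mul]
    rw [← h1, hdetu]
  refine ⟨θ, A₁, Cm * D, hA₁mem, mul_mem hCmem hDmem, ?_⟩
  have hdetCD : (Cm * D).det = μ := by rw [det_mul, hdetC, one_mul, hDdet]
  rw [hdetCD]
  have hsplit : blkDiag (μ⁻¹ : ℂ) (Cm * D) = u * k₂ := by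
    rw [hublk, hk₂_def, blkDiag_mul, one_mul]
  rw [hsplit]
  have hEu : Emat (M+1) θ * u = star k₁ * (g * star k₂) := by
    rw [hu_def, ← mul_assoc, Emat_mul_neg hN', one_mul]
  calc g = (k₁ * star k₁) * (g * (star k₂ * k₂)) := by rw [hk1s, hsk2, one_mul, mul_one]
    _ = k₁ * (star k₁ * (g * star k₂)) * k₂ := by
        simp only [mul_assoc]
    _ = k₁ * (Emat (M+1) θ * u) * k₂ := by rw [hEu]
    _ = k₁ * Emat (M+1) θ * (u * k₂) := by simp only [mul_assoc]
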